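/- Let λ ⊢ n, let T be a standard Young tableau of shape λ, let M be a semi-standard Young tableau of shape λ with non-negative integer entries, and let F_{M,T} be the generalized higher Specht polynomial, defined as the image of the R(T)-orbit sum of the monomial p_{M,T} = Π_i x_i^{h_i} (where h_i is the entry of M in the box of T containing i) under the signed column-group operator Σ_{σ ∈ C(T)} sgn(σ)σ. Then the coefficient of the monomial p_{M,T} in F_{M,T} equals 1. -/

import Mathlib

/-- `pos : Fin n → ℕ × ℕ` represents a standard Young tableau of size `n`, where
`pos i` is the (row, column) of the box containing the entry `i+1`. -/
def IsSYT (n : ℕ) (pos : Fin n → ℕ × ℕ) : Prop :=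
  Function.Injective pos ∧
    ∀ (i : Fin n) (r c : ℕ),
      (pos i = (r + 1, c) → ∃ i' : Fin n, i' < i ∧ pos i' = (r, c)) ∧
      (pos i = (r, c + 1) → ∃ i' : Fin n, i' < i ∧ pos i' = (r, c))

/-- The row group `R(T)`: permutations of the entries preserving each row of `T`. -/
def rowGroup (n : ℕ) (pos : Fin n → ℕ × ℕ) : Finset (Equiv.Perm (Fin n)) :=
  Finset.univ.filter fun σ => ∀ i, (pos (σ i)).1 = (pos i).1

/-- The column group `C(T)`: permutations of the entries preserving each column of `T`. -/
def colGroup (n : ℕ) (pos : Fin n → ℕ × ℕ) : Finset (Equiv.Perm (Fin n)) :=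
  Finset.univ.filter fun σ => ∀ i, (pos (σ i)).2 = (pos i).2

/-- The `R(T)`-orbit sum of the monomial `p_{M,T} = ∏ᵢ xᵢ^{h i}` (each monomial of the
orbit appearing once, which equals the sum over cosets of the stabilizer). -/
noncomputable def orbitSum (n : ℕ) (pos : Fin n → ℕ × ℕ) (h : Fin n → ℕ) :
    MvPolynomial (Fin n) ℚ :=
  ∑ d ∈ (rowGroup n pos).image (fun τ : Equiv.Perm (Fin n) => h ∘ ⇑τ),
    MvPolynomial.monomial (Finsupp.equivFunOnFinite.symm d) (1 : ℚ)

/-- The generalized higher Specht polynomial `F_{M,T}`: the image of the `R(T)`-orbit sum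
of `p_{M,T}` under the operator `∑_{σ ∈ C(T)} sgn(σ) σ`. -/
noncomputable def genSpecht (n : ℕ) (pos : Fin n → ℕ × ℕ) (h : Fin n → ℕ) :
    MvPolynomial (Fin n) ℚ :=
  ∑ σ ∈ colGroup n pos,
    ((Equiv.Perm.sign σ : ℤ) : ℚ) • MvPolynomial.rename (⇑σ) (orbitSum n pos h)

/-- Key combinatorial lemma: if `σ` preserves columns, `τ` preserves rows, and the
monomials `p ∘ σ` and `p ∘ τ` agree (where `p` reads off the semistandard entries),
then `σ` is the identity. -/
lemma specht_key (n : ℕ) (μ : YoungDiagram) (pos : Fin n → ℕ × ℕ)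
    (hinj : Function.Injective pos) (hshape : Set.range pos = ↑μ.cells)
    (M : SemistandardYoungTableau μ) (σ τ : Equiv.Perm (Fin n))
    (hσ : ∀ i, (pos (σ i)).2 = (pos i).2)
    (hτ : ∀ i, (pos (τ i)).1 = (pos i).1)
    (heq : ∀ i, M (pos (σ i)).1 (pos (σ i)).2 = M (pos (τ i)).1 (pos (τ i)).2) :
    σ = 1 := by
  set h : Fin n → ℕ := fun i => M (pos i).1 (pos i).2 with hh
  have hmem : ∀ i, pos i ∈ μ := by
    intro i
    have h1 : pos i ∈ Set.range pos := ⟨i, rfl⟩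
    rw [hshape] at h1
    simpa using h1
  have hstrict : ∀ i j : Fin n, (pos i).2 = (pos j).2 → (pos i).1 < (pos j).1 →
      h i < h j := by
    intro i j hc hr
    have hcell : ((pos j).1, (pos j).2) ∈ μ := by
      have := hmem j; rwa [Prod.mk.eta]
    have := M.col_strict hr hcell
    simpa [hh, hc] using this
  have main : ∀ r : ℕ, ∀ i : Fin n, (pos i).1 < r → σ i = i := by
    intro r
    induction r with
    | zero => intro i hi; omega
    | succ r IH =>
      -- anyone in row `r` is sent by `σ` to row `≥ r`
      have hA : ∀ i : Fin n, (pos i).1 = r → r ≤ (pos (σ i)).1 := by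
        intro i hi
        by_contra hlt
        push_neg at hlt
        have h1 : σ (σ i) = σ i := IH (σ i) hlt
        have h2 : σ i = i := σ.injective h1
        rw [h2] at hlt
        omega
      -- pointwise inequality on row `r`
      have hB : ∀ i : Fin n, (pos i).1 = r → h i ≤ h (σ i) := by
        intro i hi
        rcases lt_or_eq_of_le (hA i hi) with hlt | heqr
        · exact le_of_lt (hstrict i (σ i) (hσ i).symm (by omega))
        · have hpos : pos (σ i) = pos i :=
            Prod.ext (by omega) (hσ i)
          rw [hinj hpos]
      -- sum over row `r` is preserved
      have hC : ∑ i ∈ Finset.univ.filter (fun i : Fin n => (pos i).1 = r), h (σ i)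
          = ∑ i ∈ Finset.univ.filter (fun i : Fin n => (pos i).1 = r), h i := by
        have e1 : ∑ i ∈ Finset.univ.filter (fun i : Fin n => (pos i).1 = r), h (σ i)
            = ∑ i ∈ Finset.univ.filter (fun i : Fin n => (pos i).1 = r), h (τ i) :=
          Finset.sum_congr rfl fun i _ => heq i
        rw [e1]
        refine Finset.sum_nbij' (fun i => τ i) (fun i => τ⁻¹ i) ?_ ?_ ?_ ?_ ?_
        · intro a ha
          simp only [Finset.mem_filter, Finset.mem_univ, true_and] at ha ⊢
          rw [hτ a]; exact ha
        · intro a ha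
          simp only [Finset.mem_filter, Finset.mem_univ, true_and] at ha ⊢
          have := hτ (τ⁻¹ a)
          rw [show τ (τ⁻¹ a) = a from τ.apply_symm_apply a] at this
          omega
        · intro a _; exact τ.symm_apply_apply a
        · intro a _; exact τ.apply_symm_apply a
        · intro a _; rfl
      have hD : ∀ i ∈ Finset.univ.filter (fun i : Fin n => (pos i).1 = r),
          h i = h (σ i) := by
        refine (Finset.sum_eq_sum_iff_of_le ?_).1 hC.symm
        intro i hi
        simp only [Finset.mem_filter, Finset.mem_univ, true_and] at hi
        exact hB i hi
      intro i hi
      rcases Nat.lt_succ_iff_lt_or_eq.1 hi with h1 | h1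
      · exact IH i h1
      · have hDi : h i = h (σ i) :=
          hD i (by simp only [Finset.mem_filter, Finset.mem_univ, true_and]; exact h1)
        rcases lt_or_eq_of_le (hA i h1) with hlt | heqr
        · exact absurd hDi (by
            have := hstrict i (σ i) (hσ i).symm (by omega)
            omega)
        · exact hinj (Prod.ext (by omega) (hσ i))
  refine Equiv.ext fun i => ?_
  exact main ((pos i).1 + 1) i (Nat.lt_succ_self _)

/-- The coefficient of the monomial `p_{M,T}` in the generalized higher Specht polynomial
`F_{M,T}` equals `1`.  Here `T` is a standard Young tableau of the shape `μ`, `M` a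
semistandard tableau of the same shape, and `h i = M(pos i)` records the entry of `M` in
the box of `T` containing `i+1`. -/
theorem stmt15 (n : ℕ) (μ : YoungDiagram) (pos : Fin n → ℕ × ℕ)
    (hT : IsSYT n pos) (hshape : Set.range pos = ↑μ.cells)
    (M : SemistandardYoungTableau μ) :
    MvPolynomial.coeff
      (Finsupp.equivFunOnFinite.symm fun i => M (pos i).1 (pos i).2)
      (genSpecht n pos fun i => M (pos i).1 (pos i).2) = 1 := by
  obtain ⟨hinj, -⟩ := hT
  set h : Fin n → ℕ := fun i => M (pos i).1 (pos i).2 with hh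
  set D : Finset (Fin n → ℕ) :=
    (rowGroup n pos).image (fun τ : Equiv.Perm (Fin n) => h ∘ ⇑τ) with hD
  -- coefficient of a monomial in the orbit sum
  have horb : ∀ g : Fin n → ℕ,
      MvPolynomial.coeff (Finsupp.equivFunOnFinite.symm g) (orbitSum n pos h)
        = if g ∈ D then 1 else 0 := by
    intro g
    unfold orbitSum
    rw [MvPolynomial.coeff_sum]
    simp only [MvPolynomial.coeff_monomial, Equiv.apply_eq_iff_eq]
    rw [Finset.sum_ite_eq' D g (fun _ => (1 : ℚ))]
  -- the target monomial is `mapDomain σ` of the monomial of `h ∘ σ`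
  have hmap : ∀ σ : Equiv.Perm (Fin n),
      Finsupp.mapDomain ⇑σ (Finsupp.equivFunOnFinite.symm (h ∘ ⇑σ))
        = Finsupp.equivFunOnFinite.symm h := by
    intro σ
    ext j
    rw [Finsupp.mapDomain_equiv_apply]
    simp
  have hren : ∀ σ : Equiv.Perm (Fin n),
      MvPolynomial.coeff (Finsupp.equivFunOnFinite.symm h)
        (MvPolynomial.rename (⇑σ) (orbitSum n pos h))
        = if (h ∘ ⇑σ) ∈ D then 1 else 0 := by
    intro σ
    rw [← hmap σ, MvPolynomial.coeff_rename_mapDomain _ σ.injective, horb]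
  unfold genSpecht
  rw [MvPolynomial.coeff_sum]
  rw [Finset.sum_eq_single (1 : Equiv.Perm (Fin n))]
  · rw [MvPolynomial.coeff_smul, hren 1]
    have hmem : (h ∘ ⇑(1 : Equiv.Perm (Fin n))) ∈ D := by
      rw [hD]
      exact Finset.mem_image_of_mem _ (by
        simp only [rowGroup, Finset.mem_filter, Finset.mem_univ, true_and]
        intro i; rfl)
    rw [if_pos hmem]
    simp
  · intro σ hσmem hσne
    rw [MvPolynomial.coeff_smul, hren σ]
    have : (h ∘ ⇑σ) ∉ D := by
      intro hcon
      rw [hD] at hcon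
      obtain ⟨τ, hτmem, hτeq⟩ := Finset.mem_image.1 hcon
      simp only [rowGroup, Finset.mem_filter, Finset.mem_univ, true_and] at hτmem
      simp only [colGroup, Finset.mem_filter, Finset.mem_univ, true_and] at hσmem
      have heq' : ∀ i, M (pos (σ i)).1 (pos (σ i)).2 = M (pos (τ i)).1 (pos (τ i)).2 := by
        intro i
        have := congrFun hτeq i
        simpa [hh] using this.symm
      exact hσne (specht_key n μ pos hinj hshape M σ τ hσmem hτmem heq')
    rw [if_neg this]
    simp
  · intro hcon
    exact absurd (by
      simp only [colGroup, Finset.mem_filter, Finset.mem_univ, true_and]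
      intro i; rfl) hcon
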